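/- Let f be ρ-strongly convex (ρ ≥ 0), g be (1/β)-smooth convex, and τ > 0. Then for every a ∈ [ρ, ∞) ∩ {ρ, 1/α} and b ∈ {0, 1/β}, the Douglas–Rachford map on the quadratics f(x)=a·x²/2, g(x)=b·x²/2 achieves contraction factor exactly (1+τ²ab)/((1+τa)(1+τb)). Consequently, the worst-case contraction factor r_DRS(τ) over the class of ρ-strongly convex (1/α)-smooth f and convex (1/β)-smooth g satisfies r_DRS(τ) ≥ max over a ∈ {ρ, 1/α}, b ∈ {0, 1/β} of (1+τ²ab)/((1+τa)(1+τb)). -/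
import Mathlib

lemma quad_convex (c : ℝ) (hc : 0 ≤ c) : ConvexOn ℝ Set.univ (fun x : ℝ => c * x ^ 2) := by
  have h := (Even.convexOn_pow (n := 2) (by norm_num)).smul hc
  simpa [smul_eq_mul] using h

lemma prox_ineq (a τ : ℝ) (ha : 0 ≤ a) (hτ : 0 < τ) (x u : ℝ) :
    a / 2 * (x / (1 + τ * a)) ^ 2 + (x / (1 + τ * a) - x) ^ 2 / (2 * τ) ≤
      a / 2 * u ^ 2 + (u - x) ^ 2 / (2 * τ) := by
  have h1 : 0 < 1 + τ * a := by positivity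
  rw [← sub_nonneg]
  have key : a / 2 * u ^ 2 + (u - x) ^ 2 / (2 * τ) -
      (a / 2 * (x / (1 + τ * a)) ^ 2 + (x / (1 + τ * a) - x) ^ 2 / (2 * τ)) =
      (1 + τ * a) / (2 * τ) * (u - x / (1 + τ * a)) ^ 2 := by
    field_simp; ring
  rw [key]; positivity

lemma corner_bound (α β ρ τ a b r : ℝ) (hα : 0 < α) (hβ : 0 < β) (hτ : 0 < τ)
    (hρ : 0 ≤ ρ) (hρa : ρ ≤ a) (haα : a ≤ 1 / α) (hb0 : 0 ≤ b) (hbβ : b ≤ 1 / β)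
    (H : ∀ f g : ℝ → ℝ, ∀ pf pg : ℝ → ℝ,
        ConvexOn ℝ Set.univ (fun x => f x - ρ / 2 * x ^ 2) →
        ConvexOn ℝ Set.univ (fun x => (1 / (2 * α)) * x ^ 2 - f x) →
        ConvexOn ℝ Set.univ g →
        ConvexOn ℝ Set.univ (fun x => (1 / (2 * β)) * x ^ 2 - g x) →
        (∀ x u, f (pf x) + (pf x - x) ^ 2 / (2 * τ) ≤ f u + (u - x) ^ 2 / (2 * τ)) →
        (∀ x u, g (pg x) + (pg x - x) ^ 2 / (2 * τ) ≤ g u + (u - x) ^ 2 / (2 * τ)) →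
        ∀ x y : ℝ, |(pg (2 * pf x - x) - pf x + x) - (pg (2 * pf y - y) - pf y + y)|
          ≤ r * |x - y|) :
    (1 + τ ^ 2 * a * b) / ((1 + τ * a) * (1 + τ * b)) ≤ r := by
  have ha0 : 0 ≤ a := le_trans hρ hρa
  have h1 : 0 < 1 + τ * a := by positivity
  have h2 : 0 < 1 + τ * b := by positivity
  have haα' : a / 2 ≤ 1 / (2 * α) := by
    have : 1 / (2 * α) = (1 / α) / 2 := by ring
    rw [this]; linarith
  have hbβ' : b / 2 ≤ 1 / (2 * β) := by
    have : 1 / (2 * β) = (1 / β) / 2 := by ring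
    rw [this]; linarith
  have key := H (fun x => a / 2 * x ^ 2) (fun x => b / 2 * x ^ 2)
    (fun x => x / (1 + τ * a)) (fun x => x / (1 + τ * b))
    (by
      have := quad_convex ((a - ρ) / 2) (by linarith)
      convert this using 2 with x; ring)
    (by
      have := quad_convex (1 / (2 * α) - a / 2) (by linarith)
      convert this using 2 with x; ring)
    (quad_convex (b / 2) (by linarith))
    (by
      have := quad_convex (1 / (2 * β) - b / 2) (by linarith)
      convert this using 2 with x; ring)
    (fun x u => prox_ineq a τ ha0 hτ x u)
    (fun x u => prox_ineq b τ hb0 hτ x u)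
    1 0
  simp only [zero_div, sub_zero, mul_zero] at key
  have hΦ : ((2 * (1 / (1 + τ * a)) - 1) / (1 + τ * b)) - 1 / (1 + τ * a) + 1 =
      (1 + τ ^ 2 * a * b) / ((1 + τ * a) * (1 + τ * b)) := by
    field_simp; ring
  rw [hΦ] at key
  have hfac : 0 ≤ (1 + τ ^ 2 * a * b) / ((1 + τ * a) * (1 + τ * b)) := by positivity
  simpa [abs_of_nonneg hfac] using key


/-- DRS lower bound via quadratics: on f = a x²/2, g = b x²/2 with
a ∈ {ρ, 1/α}, b ∈ {0, 1/β}, the DRS map scales exactly by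
(1+τ²ab)/((1+τa)(1+τb)); hence any worst-case contraction factor r valid over
the whole class of ρ-strongly convex (1/α)-smooth f and convex (1/β)-smooth g
satisfies r ≥ max over the four corners. -/
theorem drs_lower_bound (α β ρ τ : ℝ) (hα : 0 < α) (hβ : 0 < β) (hρ : 0 ≤ ρ)
    (hρα : ρ ≤ 1 / α) (hτ : 0 < τ) :
    (∀ a ∈ ({ρ, 1 / α} : Set ℝ), ∀ b ∈ ({0, 1 / β} : Set ℝ), ∀ x : ℝ,
      ((2 * (x / (1 + τ * a)) - x) / (1 + τ * b)) - x / (1 + τ * a) + x =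
        ((1 + τ ^ 2 * a * b) / ((1 + τ * a) * (1 + τ * b))) * x) ∧
    ∀ r : ℝ,
      (∀ f g : ℝ → ℝ, ∀ pf pg : ℝ → ℝ,
        ConvexOn ℝ Set.univ (fun x => f x - ρ / 2 * x ^ 2) →
        ConvexOn ℝ Set.univ (fun x => (1 / (2 * α)) * x ^ 2 - f x) →
        ConvexOn ℝ Set.univ g →
        ConvexOn ℝ Set.univ (fun x => (1 / (2 * β)) * x ^ 2 - g x) →
        (∀ x u, f (pf x) + (pf x - x) ^ 2 / (2 * τ) ≤ f u + (u - x) ^ 2 / (2 * τ)) →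
        (∀ x u, g (pg x) + (pg x - x) ^ 2 / (2 * τ) ≤ g u + (u - x) ^ 2 / (2 * τ)) →
        ∀ x y : ℝ, |(pg (2 * pf x - x) - pf x + x) - (pg (2 * pf y - y) - pf y + y)|
          ≤ r * |x - y|) →
      r ≥ max
        (max ((1 + τ ^ 2 * ρ * 0) / ((1 + τ * ρ) * (1 + τ * 0)))
             ((1 + τ ^ 2 * ρ * (1 / β)) / ((1 + τ * ρ) * (1 + τ * (1 / β)))))
        (max ((1 + τ ^ 2 * (1 / α) * 0) / ((1 + τ * (1 / α)) * (1 + τ * 0)))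
             ((1 + τ ^ 2 * (1 / α) * (1 / β)) /
               ((1 + τ * (1 / α)) * (1 + τ * (1 / β))))) := by
  constructor
  · intro a ha b hb x
    have ha0 : 0 ≤ a := by
      rcases ha with rfl | ha
      · exact hρ
      · simp only [Set.mem_singleton_iff] at ha; subst ha; positivity
    have hb0 : 0 ≤ b := by
      rcases hb with rfl | hb
      · exact le_refl 0
      · simp only [Set.mem_singleton_iff] at hb; subst hb; positivity
    have h1 : (0:ℝ) < 1 + τ * a := by positivity
    have h2 : (0:ℝ) < 1 + τ * b := by positivity
    field_simp
    ring
  · intro r hr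
    rw [ge_iff_le]
    have hβ' : (0:ℝ) ≤ 1 / β := by positivity
    refine max_le (max_le ?_ ?_) (max_le ?_ ?_)
    · exact corner_bound α β ρ τ ρ 0 r hα hβ hτ hρ le_rfl hρα le_rfl hβ' hr
    · exact corner_bound α β ρ τ ρ (1/β) r hα hβ hτ hρ le_rfl hρα hβ' le_rfl hr
    · exact corner_bound α β ρ τ (1/α) 0 r hα hβ hτ hρ hρα le_rfl le_rfl hβ' hr
    · exact corner_bound α β ρ τ (1/α) (1/β) r hα hβ hτ hρ hρα le_rfl hβ' le_rfl hr
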